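/- Trajectory convergence (part of Theorem 2.3): Under assumptions (H1) and (H2), let x : [0, ∞) → ℝ^n be continuously differentiable with x(t) ∈ S and ẋ(t) = F(x(t)) for all t ≥ 0. Then the function t ↦ θ(x(t)) is nonincreasing, the trajectory {x(t) : t ≥ 0} is bounded, the limit l := lim_{t→∞} θ(x(t)) exists, and every accumulation point of x(t) as t → ∞ belongs to Φ ∩ {x ∈ S : θ(x) = l}. -/

import Mathlib

open Matrix Set Filter

noncomputable section

/-- The gradient of `f : ℝⁿ → ℝ` at `x`, as the vector of partial derivatives. -/
def grad {n : ℕ} (f : (Fin n → ℝ) → ℝ) (x : Fin n → ℝ) : Fin n → ℝ :=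
  fun j => fderiv ℝ f x (Pi.single j 1)

/-- The feasible set `S`. -/
def feas {n m k : ℕ} (h : Fin m → (Fin n → ℝ) → ℝ) (g : Fin k → (Fin n → ℝ) → ℝ) :
    Set (Fin n → ℝ) :=
  {x | (∀ i, h i x = 0) ∧ (∀ j, g j x ≤ 0)}

/-- Jacobian of the equality constraints (rows `∇h_i(x)`). -/
def matA {n m : ℕ} (h : Fin m → (Fin n → ℝ) → ℝ) (x : Fin n → ℝ) :
    Matrix (Fin m) (Fin n) ℝ :=
  Matrix.of fun i => grad (h i) x

/-- Jacobian of the inequality constraints (rows `∇g_j(x)`). -/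
def matB {n k : ℕ} (g : Fin k → (Fin n → ℝ) → ℝ) (x : Fin n → ℝ) :
    Matrix (Fin k) (Fin n) ℝ :=
  Matrix.of fun j => grad (g j) x

/-- `H(x) = I − Aᵀ(AAᵀ)⁻¹A`. -/
def matH {n m : ℕ} (h : Fin m → (Fin n → ℝ) → ℝ) (x : Fin n → ℝ) :
    Matrix (Fin n) (Fin n) ℝ :=
  1 - (matA h x)ᵀ * (matA h x * (matA h x)ᵀ)⁻¹ * matA h x

/-- `Q(x) = B(x)H(x)B(x)ᵀ − diag(g(x))`. -/
def matQ {n m k : ℕ} (h : Fin m → (Fin n → ℝ) → ℝ) (g : Fin k → (Fin n → ℝ) → ℝ)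
    (x : Fin n → ℝ) : Matrix (Fin k) (Fin k) ℝ :=
  matB g x * matH h x * (matB g x)ᵀ - Matrix.diagonal (fun j => g j x)

/-- Assumption (H1). -/
def hypH1 {n m k : ℕ} (θ : (Fin n → ℝ) → ℝ) (h : Fin m → (Fin n → ℝ) → ℝ)
    (g : Fin k → (Fin n → ℝ) → ℝ) : Prop :=
  (feas h g).Nonempty ∧ ∀ x₀ ∈ feas h g, IsCompact {x ∈ feas h g | θ x ≤ θ x₀}

/-- Assumption (H2). -/
def hypH2 {n m k : ℕ} (h : Fin m → (Fin n → ℝ) → ℝ) (g : Fin k → (Fin n → ℝ) → ℝ) : Prop :=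
  ∀ x ∈ feas h g,
    LinearIndependent ℝ
      (Sum.elim (fun i : Fin m => grad (h i) x)
        (fun j : {j : Fin k // g j x = 0} => grad (g (j : Fin k)) x))

/-- `P(x) = Q(x)⁻¹ B(x) H(x)`. -/
def matP {n m k : ℕ} (h : Fin m → (Fin n → ℝ) → ℝ) (g : Fin k → (Fin n → ℝ) → ℝ)
    (x : Fin n → ℝ) : Matrix (Fin k) (Fin n) ℝ :=
  (matQ h g x)⁻¹ * matB g x * matH h x

/-- `v(x) = P(x)(∇θ(x))ᵀ`. -/
def vecv {n m k : ℕ} (θ : (Fin n → ℝ) → ℝ) (h : Fin m → (Fin n → ℝ) → ℝ)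
    (g : Fin k → (Fin n → ℝ) → ℝ) (x : Fin n → ℝ) : Fin k → ℝ :=
  (matP h g x).mulVec (grad θ x)

/-- componentwise positive part. -/
def pPart {k : ℕ} (w : Fin k → ℝ) : Fin k → ℝ := fun j => max 0 (w j)

/-- `R₃(x)`. -/
def matR3 {n k : ℕ} (b c : Fin k → (Fin n → ℝ) → ℝ) (p : Fin k → ℕ) (x : Fin n → ℝ)
    (v : Fin k → ℝ) : Matrix (Fin k) (Fin k) ℝ :=
  Matrix.diagonal (fun j => b j x + c j x * (max 0 (v j)) ^ (2 * p j))

/-- The vector field `F(x)` of (2.4), (2.5). -/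
def vecF {n m k : ℕ} (θ : (Fin n → ℝ) → ℝ) (h : Fin m → (Fin n → ℝ) → ℝ)
    (g : Fin k → (Fin n → ℝ) → ℝ)
    (R1 : (Fin n → ℝ) → Matrix (Fin n) (Fin n) ℝ)
    (R2 : (Fin n → ℝ) → Matrix (Fin k) (Fin k) ℝ)
    (a b c : Fin k → (Fin n → ℝ) → ℝ) (p : Fin k → ℕ) (x : Fin n → ℝ) : Fin n → ℝ :=
  -(((matH h x - (matP h g x)ᵀ * matQ h g x * matP h g x) * R1 x *
      (matH h x - (matP h g x)ᵀ * matQ h g x * matP h g x)).mulVec (grad θ x))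
  - ((matP h g x)ᵀ * Matrix.diagonal (fun j => g j x) *
      (R2 x * Matrix.diagonal (fun j => g j x) - Matrix.diagonal (fun j => a j x))).mulVec
        (vecv θ h g x)
  - ((matP h g x)ᵀ * matR3 b c p x (vecv θ h g x)).mulVec (pPart (vecv θ h g x))

/-- The set `Φ` of KKT points. -/
def KKTset {n m k : ℕ} (θ : (Fin n → ℝ) → ℝ) (h : Fin m → (Fin n → ℝ) → ℝ)
    (g : Fin k → (Fin n → ℝ) → ℝ) : Set (Fin n → ℝ) :=
  {x | x ∈ feas h g ∧ ∃ (lam : Fin m → ℝ) (mu : Fin k → ℝ),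
    (∀ j, 0 ≤ mu j) ∧
    grad θ x + (∑ i, lam i • grad (h i) x) + (∑ j, mu j • grad (g j) x) = 0 ∧
    (∑ j, mu j * g j x) = 0}



section Aux

variable {n m k : ℕ}

/-- The Lie derivative of `θ` along the vector field `F`. -/
def lieG (θ : (Fin n → ℝ) → ℝ) (h : Fin m → (Fin n → ℝ) → ℝ) (g : Fin k → (Fin n → ℝ) → ℝ)
    (R1 : (Fin n → ℝ) → Matrix (Fin n) (Fin n) ℝ)
    (R2 : (Fin n → ℝ) → Matrix (Fin k) (Fin k) ℝ)
    (a b c : Fin k → (Fin n → ℝ) → ℝ) (p : Fin k → ℕ) (y : Fin n → ℝ) : ℝ :=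
  dotProduct (grad θ y) (vecF θ h g R1 R2 a b c p y)

lemma dot_mulVec_left {r s : ℕ} (M : Matrix (Fin r) (Fin s) ℝ) (u : Fin r → ℝ) (w : Fin s → ℝ) :
    u ⬝ᵥ (M *ᵥ w) = (Mᵀ *ᵥ u) ⬝ᵥ w := by
  rw [Matrix.dotProduct_mulVec, Matrix.mulVec_transpose]

lemma transpose_mulVec_eq_sum {r : ℕ} (M : Matrix (Fin r) (Fin n) ℝ) (w : Fin r → ℝ) :
    Mᵀ *ᵥ w = ∑ i, w i • (M i) := by
  ext j
  simp [Matrix.mulVec, dotProduct, Matrix.transpose_apply, Finset.sum_apply, mul_comm]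

lemma isHermitian_of_transpose {r : ℕ} (M : Matrix (Fin r) (Fin r) ℝ) (hM : Mᵀ = M) :
    M.IsHermitian := by
  have : Mᴴ = Mᵀ := by
    ext i j
    simp [Matrix.conjTranspose_apply, Matrix.transpose_apply]
  exact this.trans hM

lemma gram_posdef {r : ℕ} (M : Matrix (Fin r) (Fin n) ℝ)
    (hli : LinearIndependent ℝ (fun i : Fin r => M i)) : (M * Mᵀ).PosDef := by
  rw [Matrix.posDef_iff_dotProduct_mulVec]
  constructor
  · refine isHermitian_of_transpose _ ?_
    rw [Matrix.transpose_mul, Matrix.transpose_transpose]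
  · intro z hz
    have hq : dotProduct (star z) ((M * Mᵀ) *ᵥ z) = (Mᵀ *ᵥ z) ⬝ᵥ (Mᵀ *ᵥ z) := by
      rw [star_trivial, ← Matrix.mulVec_mulVec, dot_mulVec_left]
    rw [hq]
    have hnz : Mᵀ *ᵥ z ≠ 0 := by
      intro h0
      apply hz
      have := (Fintype.linearIndependent_iff.mp hli) z (by
        rw [← transpose_mulVec_eq_sum]; exact h0)
      funext i; exact this i
    have h0 : (0:ℝ) ≤ (Mᵀ *ᵥ z) ⬝ᵥ (Mᵀ *ᵥ z) :=
      Finset.sum_nonneg fun i _ => mul_self_nonneg _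
    rcases h0.lt_or_eq with h | h
    · exact h
    · exact absurd (dotProduct_self_eq_zero.mp h.symm) hnz

lemma proj_transpose {r : ℕ} (A : Matrix (Fin r) (Fin n) ℝ) :
    (1 - Aᵀ * (A * Aᵀ)⁻¹ * A)ᵀ = 1 - Aᵀ * (A * Aᵀ)⁻¹ * A := by
  have h1 : ((A * Aᵀ)⁻¹)ᵀ = (A * Aᵀ)⁻¹ := by
    rw [Matrix.transpose_nonsing_inv, Matrix.transpose_mul, Matrix.transpose_transpose]
  rw [Matrix.transpose_sub, Matrix.transpose_one, Matrix.transpose_mul, Matrix.transpose_mul,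
    Matrix.transpose_transpose, h1, Matrix.mul_assoc]

lemma proj_mul_At {r : ℕ} (A : Matrix (Fin r) (Fin n) ℝ) (hdA : IsUnit (A * Aᵀ).det) :
    (1 - Aᵀ * (A * Aᵀ)⁻¹ * A) * Aᵀ = 0 := by
  rw [Matrix.sub_mul, Matrix.one_mul, Matrix.mul_assoc (Aᵀ * (A * Aᵀ)⁻¹) A Aᵀ,
    Matrix.mul_assoc Aᵀ ((A * Aᵀ)⁻¹) (A * Aᵀ), Matrix.nonsing_inv_mul _ hdA,
    Matrix.mul_one, sub_self]

lemma proj_idem {r : ℕ} (A : Matrix (Fin r) (Fin n) ℝ) (hdA : IsUnit (A * Aᵀ).det) :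
    (1 - Aᵀ * (A * Aᵀ)⁻¹ * A) * (1 - Aᵀ * (A * Aᵀ)⁻¹ * A) = 1 - Aᵀ * (A * Aᵀ)⁻¹ * A := by
  rw [Matrix.mul_sub, Matrix.mul_one, ← Matrix.mul_assoc, ← Matrix.mul_assoc,
    proj_mul_At A hdA, Matrix.zero_mul, Matrix.zero_mul, sub_zero]

lemma matH_transpose (h : Fin m → (Fin n → ℝ) → ℝ) (y : Fin n → ℝ) :
    (matH h y)ᵀ = matH h y := proj_transpose _

lemma matH_mul_At (h : Fin m → (Fin n → ℝ) → ℝ) (y : Fin n → ℝ)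
    (hdA : IsUnit (matA h y * (matA h y)ᵀ).det) :
    matH h y * (matA h y)ᵀ = 0 := proj_mul_At _ hdA

lemma matH_idem (h : Fin m → (Fin n → ℝ) → ℝ) (y : Fin n → ℝ)
    (hdA : IsUnit (matA h y * (matA h y)ᵀ).det) :
    matH h y * matH h y = matH h y := proj_idem _ hdA

lemma matQ_transpose (h : Fin m → (Fin n → ℝ) → ℝ) (g : Fin k → (Fin n → ℝ) → ℝ)
    (y : Fin n → ℝ) : (matQ h g y)ᵀ = matQ h g y := by
  unfold matQ
  rw [Matrix.transpose_sub, Matrix.diagonal_transpose, Matrix.transpose_mul,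
    Matrix.transpose_mul, Matrix.transpose_transpose, matH_transpose, Matrix.mul_assoc]

lemma matA_rows_li (h : Fin m → (Fin n → ℝ) → ℝ) (g : Fin k → (Fin n → ℝ) → ℝ)
    (y : Fin n → ℝ)
    (hli : LinearIndependent ℝ
      (Sum.elim (fun i : Fin m => grad (h i) y)
        (fun j : {j : Fin k // g j y = 0} => grad (g (j : Fin k)) y))) :
    LinearIndependent ℝ (fun i : Fin m => matA h y i) :=
  hli.comp Sum.inl Sum.inl_injective

lemma matAAt_det_isUnit (h : Fin m → (Fin n → ℝ) → ℝ) (g : Fin k → (Fin n → ℝ) → ℝ)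
    (y : Fin n → ℝ)
    (hli : LinearIndependent ℝ
      (Sum.elim (fun i : Fin m => grad (h i) y)
        (fun j : {j : Fin k // g j y = 0} => grad (g (j : Fin k)) y))) :
    IsUnit (matA h y * (matA h y)ᵀ).det :=
  isUnit_iff_ne_zero.mpr (gram_posdef _ (matA_rows_li h g y hli)).det_pos.ne'

lemma matQ_posdef (h : Fin m → (Fin n → ℝ) → ℝ) (g : Fin k → (Fin n → ℝ) → ℝ)
    (y : Fin n → ℝ) (hy : y ∈ feas h g)
    (hli : LinearIndependent ℝ
      (Sum.elim (fun i : Fin m => grad (h i) y)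
        (fun j : {j : Fin k // g j y = 0} => grad (g (j : Fin k)) y))) :
    (matQ h g y).PosDef := by
  have hdA := matAAt_det_isUnit h g y hli
  rw [Matrix.posDef_iff_dotProduct_mulVec]
  constructor
  · exact isHermitian_of_transpose _ (matQ_transpose h g y)
  · intro z hz
    set N := matH h y * (matB g y)ᵀ with hN
    have e1 : matB g y * matH h y * (matB g y)ᵀ = Nᵀ * N := by
      rw [hN, Matrix.transpose_mul, Matrix.transpose_transpose, matH_transpose,
        Matrix.mul_assoc (matB g y) (matH h y) (matH h y * (matB g y)ᵀ),
        ← Matrix.mul_assoc (matH h y) (matH h y), matH_idem h y hdA, ← Matrix.mul_assoc]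
    have e2 : z ⬝ᵥ (Matrix.diagonal fun j => g j y) *ᵥ z = ∑ j, g j y * (z j * z j) := by
      rw [dotProduct]
      refine Finset.sum_congr rfl fun j _ => ?_
      rw [Matrix.mulVec_diagonal]
      ring
    have key : dotProduct (star z) ((matQ h g y) *ᵥ z) =
        (N *ᵥ z) ⬝ᵥ (N *ᵥ z) + ∑ j, (-(g j y)) * (z j * z j) := by
      rw [star_trivial]
      show z ⬝ᵥ (matB g y * matH h y * (matB g y)ᵀ - Matrix.diagonal fun j => g j y) *ᵥ z = _
      rw [Matrix.sub_mulVec, dotProduct_sub, e1, e2, ← Matrix.mulVec_mulVec,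
        dot_mulVec_left, Matrix.transpose_transpose, sub_eq_add_neg, ← Finset.sum_neg_distrib]
      congr 1
      refine Finset.sum_congr rfl fun j _ => ?_
      ring
    rw [key]
    have h1 : (0:ℝ) ≤ (N *ᵥ z) ⬝ᵥ (N *ᵥ z) :=
      Finset.sum_nonneg fun i _ => mul_self_nonneg _
    have h2 : (0:ℝ) ≤ ∑ j, (-(g j y)) * (z j * z j) :=
      Finset.sum_nonneg fun j _ =>
        mul_nonneg (neg_nonneg.mpr (hy.2 j)) (mul_self_nonneg _)
    rcases lt_or_eq_of_le (add_nonneg h1 h2) with hlt | heq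
    · exact hlt
    exfalso
    have h1z : (N *ᵥ z) ⬝ᵥ (N *ᵥ z) = 0 := le_antisymm (by linarith) h1
    have h2z : ∑ j, (-(g j y)) * (z j * z j) = 0 := by linarith
    have hHB : N *ᵥ z = 0 := dotProduct_self_eq_zero.mp h1z
    have hterm : ∀ j, (-(g j y)) * (z j * z j) = 0 := fun j =>
      (Finset.sum_eq_zero_iff_of_nonneg (fun j _ =>
        mul_nonneg (neg_nonneg.mpr (hy.2 j)) (mul_self_nonneg (z j)))).mp h2z j (Finset.mem_univ j)
    have hinact : ∀ j, g j y ≠ 0 → z j = 0 := by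
      intro j hj
      have hgneg : 0 < -(g j y) := by
        rcases lt_or_eq_of_le (hy.2 j) with hlt | he
        · linarith
        · exact absurd he hj
      have hzz : z j * z j = 0 := by
        rcases mul_eq_zero.mp (hterm j) with h' | h'
        · exact absurd h' hgneg.ne'
        · exact h'
      exact mul_self_eq_zero.mp hzz
    set t := (matB g y)ᵀ *ᵥ z with ht
    set w0 := (matA h y * (matA h y)ᵀ)⁻¹ *ᵥ (matA h y *ᵥ t) with hw0
    have hAt : t = (matA h y)ᵀ *ᵥ w0 := by
      have e3 : matH h y *ᵥ t = t - (matA h y)ᵀ *ᵥ w0 := by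
        show (1 - (matA h y)ᵀ * (matA h y * (matA h y)ᵀ)⁻¹ * matA h y) *ᵥ t = _
        rw [Matrix.sub_mulVec, Matrix.one_mulVec]
        congr 1
        simp [hw0, Matrix.mulVec_mulVec, Matrix.mul_assoc]
      have e4 : matH h y *ᵥ t = 0 := by rw [ht, Matrix.mulVec_mulVec]; exact hHB
      have := e3.symm.trans e4
      exact (sub_eq_zero.mp this)
    -- build the vanishing linear combination
    have hsum : ∑ s : Fin m ⊕ {j : Fin k // g j y = 0},
        (Sum.elim (fun i => -(w0 i)) (fun j => z j.1)) s •
          (Sum.elim (fun i : Fin m => grad (h i) y)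
            (fun j : {j : Fin k // g j y = 0} => grad (g (j : Fin k)) y)) s = 0 := by
      rw [Fintype.sum_sum_type]
      have hA : ∑ i : Fin m, (-(w0 i)) • grad (h i) y = -((matA h y)ᵀ *ᵥ w0) := by
        rw [transpose_mulVec_eq_sum, ← Finset.sum_neg_distrib]
        exact Finset.sum_congr rfl fun i _ => by rw [neg_smul]; rfl
      have hB : ∑ j : {j : Fin k // g j y = 0}, z j.1 • grad (g (j : Fin k)) y = t := by
        have hsplit := Fintype.sum_subtype_add_sum_subtype (fun j : Fin k => g j y = 0)
          (fun j => z j • grad (g j) y)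
        have hzero : ∑ j : {j : Fin k // ¬ g j y = 0}, z j.1 • grad (g (j : Fin k)) y = 0 :=
          Finset.sum_eq_zero fun j _ => by rw [hinact j.1 j.2, zero_smul]
        have : ∑ j : {j : Fin k // g j y = 0}, z j.1 • grad (g (j : Fin k)) y
            = ∑ j : Fin k, z j • grad (g j) y := by
          rw [← hsplit, hzero, add_zero]
        rw [this, ht, transpose_mulVec_eq_sum]
        rfl
      simp only [Sum.elim_inl, Sum.elim_inr]
      rw [hA, hB, hAt]
      simp
    have hco := Fintype.linearIndependent_iff.mp hli _ hsum
    apply hz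
    funext j
    by_cases hj : g j y = 0
    · exact hco (Sum.inr ⟨j, hj⟩)
    · exact hinact j hj


lemma mul_maxpos (d r : ℝ) : r * (d * max 0 r) = d * (max 0 r * max 0 r) := by
  rcases le_total r 0 with hr | hr
  · rw [max_eq_left hr]; ring
  · rw [max_eq_right hr]; ring

lemma lieG_eq (θ : (Fin n → ℝ) → ℝ) (h : Fin m → (Fin n → ℝ) → ℝ)
    (g : Fin k → (Fin n → ℝ) → ℝ)
    (R1 : (Fin n → ℝ) → Matrix (Fin n) (Fin n) ℝ)
    (R2 : (Fin n → ℝ) → Matrix (Fin k) (Fin k) ℝ)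
    (a b c : Fin k → (Fin n → ℝ) → ℝ) (p : Fin k → ℕ) (y : Fin n → ℝ) :
    lieG θ h g R1 R2 a b c p y =
      -(((matH h y - (matP h g y)ᵀ * matQ h g y * matP h g y) *ᵥ grad θ y) ⬝ᵥ
          (R1 y *ᵥ ((matH h y - (matP h g y)ᵀ * matQ h g y * matP h g y) *ᵥ grad θ y)))
      - ((fun j => g j y * vecv θ h g y j) ⬝ᵥ
          (R2 y *ᵥ (fun j => g j y * vecv θ h g y j)))
      + (∑ j, a j y * (g j y * (vecv θ h g y j * vecv θ h g y j)))
      - ∑ j, (b j y + c j y * (max 0 (vecv θ h g y j)) ^ (2 * p j)) *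
          (max 0 (vecv θ h g y j) * max 0 (vecv θ h g y j)) := by
  set u := grad θ y with hu
  set v := vecv θ h g y with hv
  have hvP : v = matP h g y *ᵥ u := rfl
  set D : Matrix (Fin k) (Fin k) ℝ := Matrix.diagonal (fun j => g j y) with hD
  set Da : Matrix (Fin k) (Fin k) ℝ := Matrix.diagonal (fun j => a j y) with hDa
  set M := matH h y - (matP h g y)ᵀ * matQ h g y * matP h g y with hM
  have hMT : Mᵀ = M := by
    rw [hM, Matrix.transpose_sub, matH_transpose, Matrix.transpose_mul, Matrix.transpose_mul,
      Matrix.transpose_transpose, matQ_transpose, Matrix.mul_assoc]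
  have hPdot : ∀ w : Fin k → ℝ, u ⬝ᵥ ((matP h g y)ᵀ *ᵥ w) = v ⬝ᵥ w := by
    intro w; rw [dot_mulVec_left, Matrix.transpose_transpose, ← hvP]
  have hDv : D *ᵥ v = fun j => g j y * v j := by
    funext j; rw [hD]; exact Matrix.mulVec_diagonal _ _ _
  have hlie : lieG θ h g R1 R2 a b c p y =
      -(u ⬝ᵥ ((M * R1 y * M) *ᵥ u))
      - (u ⬝ᵥ (((matP h g y)ᵀ * D * (R2 y * D - Da)) *ᵥ v))
      - (u ⬝ᵥ (((matP h g y)ᵀ * matR3 b c p y v) *ᵥ (pPart v))) := by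
    show u ⬝ᵥ (-((M * R1 y * M) *ᵥ u)
        - (((matP h g y)ᵀ * D * (R2 y * D - Da)) *ᵥ v)
        - (((matP h g y)ᵀ * matR3 b c p y v) *ᵥ (pPart v))) = _
    rw [dotProduct_sub, dotProduct_sub, dotProduct_neg]
  have T1 : u ⬝ᵥ ((M * R1 y * M) *ᵥ u) = (M *ᵥ u) ⬝ᵥ (R1 y *ᵥ (M *ᵥ u)) := by
    rw [Matrix.mul_assoc, ← Matrix.mulVec_mulVec, dot_mulVec_left, hMT,
      ← Matrix.mulVec_mulVec]
  have T2 : u ⬝ᵥ (((matP h g y)ᵀ * D * (R2 y * D - Da)) *ᵥ v) =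
      ((fun j => g j y * v j) ⬝ᵥ (R2 y *ᵥ (fun j => g j y * v j)))
      - ∑ j, a j y * (g j y * (v j * v j)) := by
    rw [Matrix.mul_assoc, ← Matrix.mulVec_mulVec, hPdot,
      ← Matrix.mulVec_mulVec, dot_mulVec_left D v]
    have hDT : Dᵀ = D := by rw [hD, Matrix.diagonal_transpose]
    rw [hDT, hDv, Matrix.sub_mulVec, dotProduct_sub, ← Matrix.mulVec_mulVec, hDv]
    congr 1
    rw [dotProduct]
    refine Finset.sum_congr rfl fun j _ => ?_
    rw [hDa, Matrix.mulVec_diagonal]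
    ring
  have T3 : u ⬝ᵥ (((matP h g y)ᵀ * matR3 b c p y v) *ᵥ (pPart v)) =
      ∑ j, (b j y + c j y * (max 0 (v j)) ^ (2 * p j)) * (max 0 (v j) * max 0 (v j)) := by
    rw [← Matrix.mulVec_mulVec, hPdot, dotProduct]
    refine Finset.sum_congr rfl fun j _ => ?_
    rw [matR3, Matrix.mulVec_diagonal]
    exact mul_maxpos _ _
  rw [hlie, T1, T2, T3]
  ring

lemma lieG_nonpos (θ : (Fin n → ℝ) → ℝ) (h : Fin m → (Fin n → ℝ) → ℝ)
    (g : Fin k → (Fin n → ℝ) → ℝ)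
    (R1 : (Fin n → ℝ) → Matrix (Fin n) (Fin n) ℝ)
    (R2 : (Fin n → ℝ) → Matrix (Fin k) (Fin k) ℝ)
    (a b c : Fin k → (Fin n → ℝ) → ℝ) (p : Fin k → ℕ) (y : Fin n → ℝ)
    (hy : y ∈ feas h g) (hR1 : (R1 y).PosSemidef) (hR2 : (R2 y).PosSemidef)
    (ha0 : ∀ j, 0 ≤ a j y) (hb0 : ∀ j, 0 ≤ b j y) (hc0 : ∀ j, 0 ≤ c j y) :
    lieG θ h g R1 R2 a b c p y ≤ 0 := by
  rw [lieG_eq]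
  have q1 : (0:ℝ) ≤ (((matH h y - (matP h g y)ᵀ * matQ h g y * matP h g y) *ᵥ grad θ y) ⬝ᵥ
      (R1 y *ᵥ ((matH h y - (matP h g y)ᵀ * matQ h g y * matP h g y) *ᵥ grad θ y))) := by
    simpa using hR1.dotProduct_mulVec_nonneg ((matH h y - (matP h g y)ᵀ * matQ h g y * matP h g y) *ᵥ grad θ y)
  have q2 : (0:ℝ) ≤ ((fun j => g j y * vecv θ h g y j) ⬝ᵥ
      (R2 y *ᵥ (fun j => g j y * vecv θ h g y j))) := by
    simpa using hR2.dotProduct_mulVec_nonneg (fun j => g j y * vecv θ h g y j)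
  have s3 : (∑ j, a j y * (g j y * (vecv θ h g y j * vecv θ h g y j))) ≤ 0 :=
    Finset.sum_nonpos fun j _ => mul_nonpos_of_nonneg_of_nonpos (ha0 j)
      (mul_nonpos_of_nonpos_of_nonneg (hy.2 j) (mul_self_nonneg _))
  have s4 : (0:ℝ) ≤ ∑ j, (b j y + c j y * (max 0 (vecv θ h g y j)) ^ (2 * p j)) *
      (max 0 (vecv θ h g y j) * max 0 (vecv θ h g y j)) :=
    Finset.sum_nonneg fun j _ => mul_nonneg
      (add_nonneg (hb0 j) (mul_nonneg (hc0 j) (pow_nonneg (le_max_left _ _) _)))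
      (mul_self_nonneg _)
  linarith

lemma lieG_zero_kkt (θ : (Fin n → ℝ) → ℝ) (h : Fin m → (Fin n → ℝ) → ℝ)
    (g : Fin k → (Fin n → ℝ) → ℝ)
    (R1 : (Fin n → ℝ) → Matrix (Fin n) (Fin n) ℝ)
    (R2 : (Fin n → ℝ) → Matrix (Fin k) (Fin k) ℝ)
    (a b c : Fin k → (Fin n → ℝ) → ℝ) (p : Fin k → ℕ) (y : Fin n → ℝ)
    (hy : y ∈ feas h g)
    (hli : LinearIndependent ℝ
      (Sum.elim (fun i : Fin m => grad (h i) y)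
        (fun j : {j : Fin k // g j y = 0} => grad (g (j : Fin k)) y)))
    (hR1 : (R1 y).PosDef) (hR2 : (R2 y).PosSemidef)
    (ha0 : ∀ j, 0 ≤ a j y) (hb0 : ∀ j, 0 ≤ b j y) (hc0 : ∀ j, 0 ≤ c j y)
    (hbc : ∀ j, 0 < b j y + c j y)
    (hpd : (R2 y).PosDef ∨ (Matrix.diagonal fun j => a j y).PosDef)
    (hz : lieG θ h g R1 R2 a b c p y = 0) :
    y ∈ KKTset θ h g := by
  set u := grad θ y with hu
  set v := vecv θ h g y with hv
  set M := matH h y - (matP h g y)ᵀ * matQ h g y * matP h g y with hM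
  rw [lieG_eq] at hz
  have q1n : (0:ℝ) ≤ (M *ᵥ u) ⬝ᵥ (R1 y *ᵥ (M *ᵥ u)) := by
    simpa using hR1.posSemidef.dotProduct_mulVec_nonneg (M *ᵥ u)
  have q2n : (0:ℝ) ≤ ((fun j => g j y * v j) ⬝ᵥ (R2 y *ᵥ (fun j => g j y * v j))) := by
    simpa using hR2.dotProduct_mulVec_nonneg (fun j => g j y * v j)
  have s3n : (∑ j, a j y * (g j y * (v j * v j))) ≤ 0 :=
    Finset.sum_nonpos fun j _ => mul_nonpos_of_nonneg_of_nonpos (ha0 j)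
      (mul_nonpos_of_nonpos_of_nonneg (hy.2 j) (mul_self_nonneg _))
  have s4n : (0:ℝ) ≤ ∑ j, (b j y + c j y * (max 0 (v j)) ^ (2 * p j)) *
      (max 0 (v j) * max 0 (v j)) :=
    Finset.sum_nonneg fun j _ => mul_nonneg
      (add_nonneg (hb0 j) (mul_nonneg (hc0 j) (pow_nonneg (le_max_left _ _) _)))
      (mul_self_nonneg _)
  have q1z : (M *ᵥ u) ⬝ᵥ (R1 y *ᵥ (M *ᵥ u)) = 0 := by linarith
  have q2z : ((fun j => g j y * v j) ⬝ᵥ (R2 y *ᵥ (fun j => g j y * v j))) = 0 := by linarith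
  have s3z : (∑ j, a j y * (g j y * (v j * v j))) = 0 := by linarith
  have s4z : (∑ j, (b j y + c j y * (max 0 (v j)) ^ (2 * p j)) *
      (max 0 (v j) * max 0 (v j))) = 0 := by linarith
  -- M *ᵥ u = 0
  have hMu : M *ᵥ u = 0 := by
    by_contra hne
    have := hR1.dotProduct_mulVec_pos hne
    rw [star_trivial] at this
    exact absurd q1z this.ne'
  -- v ≤ 0
  have hvle : ∀ j, max 0 (v j) = 0 := by
    intro j
    have hterm := (Finset.sum_eq_zero_iff_of_nonneg (fun j _ => mul_nonneg
      (add_nonneg (hb0 j) (mul_nonneg (hc0 j) (pow_nonneg (le_max_left _ _) _)))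
      (mul_self_nonneg (max 0 (v j))))).mp s4z j (Finset.mem_univ j)
    by_contra hne
    have hpos : 0 < max 0 (v j) := lt_of_le_of_ne (le_max_left _ _) (Ne.symm hne)
    have hfac : 0 < b j y + c j y * (max 0 (v j)) ^ (2 * p j) := by
      rcases (hb0 j).lt_or_eq with hb | hb
      · have : (0:ℝ) ≤ c j y * (max 0 (v j)) ^ (2 * p j) :=
          mul_nonneg (hc0 j) (pow_nonneg (le_max_left _ _) _)
        linarith
      · have hc : 0 < c j y := by have := hbc j; linarith
        have : 0 < c j y * (max 0 (v j)) ^ (2 * p j) :=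
          mul_pos hc (pow_pos hpos _)
        linarith
    have : 0 < (b j y + c j y * (max 0 (v j)) ^ (2 * p j)) * (max 0 (v j) * max 0 (v j)) :=
      mul_pos hfac (mul_pos hpos hpos)
    exact absurd hterm this.ne'
  have hv0 : ∀ j, v j ≤ 0 := fun j => by
    have := hvle j
    by_contra hgt
    push_neg at hgt
    rw [max_eq_right hgt.le] at this
    exact hgt.ne' (by linarith)
  -- g j y * v j = 0
  have hgv : ∀ j, g j y * v j = 0 := by
    rcases hpd with hR2pd | hDapd
    · have hw : (fun j => g j y * v j) = (0 : Fin k → ℝ) := by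
        by_contra hne
        have := hR2pd.dotProduct_mulVec_pos hne
        rw [star_trivial] at this
        exact absurd q2z this.ne'
      intro j; exact congrFun hw j
    · have hapos : ∀ j, 0 < a j y := Matrix.posDef_diagonal_iff.mp hDapd
      intro j
      have hterm := (Finset.sum_eq_zero_iff_of_nonpos (fun j _ =>
        mul_nonpos_of_nonneg_of_nonpos (ha0 j)
          (mul_nonpos_of_nonpos_of_nonneg (hy.2 j) (mul_self_nonneg _)))).mp s3z j
          (Finset.mem_univ j)
      have hgz : g j y * (v j * v j) = 0 := by
        rcases mul_eq_zero.mp hterm with h' | h'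
        · exact absurd h' (hapos j).ne'
        · exact h'
      rcases mul_eq_zero.mp hgz with h' | h'
      · rw [h', zero_mul]
      · rw [mul_self_eq_zero.mp h', mul_zero]
  -- stationarity
  have hdA := matAAt_det_isUnit h g y hli
  have hQpd := matQ_posdef h g y hy hli
  have hQd : IsUnit (matQ h g y).det := isUnit_iff_ne_zero.mpr hQpd.det_pos.ne'
  have hPtQ : (matP h g y)ᵀ * matQ h g y = matH h y * (matB g y)ᵀ := by
    unfold matP
    rw [Matrix.transpose_mul, Matrix.transpose_mul, matH_transpose,
      Matrix.transpose_nonsing_inv, matQ_transpose, Matrix.mul_assoc,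
      Matrix.mul_assoc, Matrix.nonsing_inv_mul _ hQd, Matrix.mul_one]
  have hHu : matH h y *ᵥ (u - (matB g y)ᵀ *ᵥ v) = 0 := by
    have e1 : matH h y *ᵥ u = ((matP h g y)ᵀ * matQ h g y * matP h g y) *ᵥ u := by
      have e0 : (matH h y - (matP h g y)ᵀ * matQ h g y * matP h g y) *ᵥ u = 0 := hMu
      rw [Matrix.sub_mulVec] at e0
      exact sub_eq_zero.mp e0
    have e2 : ((matP h g y)ᵀ * matQ h g y * matP h g y) *ᵥ u =
        matH h y *ᵥ ((matB g y)ᵀ *ᵥ v) := by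
      rw [hPtQ, Matrix.mul_assoc, ← Matrix.mulVec_mulVec, ← Matrix.mulVec_mulVec]
      rfl
    rw [Matrix.mulVec_sub, e1, e2, sub_self]
  set w0 := (matA h y * (matA h y)ᵀ)⁻¹ *ᵥ (matA h y *ᵥ (u - (matB g y)ᵀ *ᵥ v)) with hw0
  have hsub : u - (matB g y)ᵀ *ᵥ v = (matA h y)ᵀ *ᵥ w0 := by
    set t := u - (matB g y)ᵀ *ᵥ v with ht
    have e3 : matH h y *ᵥ t = t - (matA h y)ᵀ *ᵥ w0 := by
      show (1 - (matA h y)ᵀ * (matA h y * (matA h y)ᵀ)⁻¹ * matA h y) *ᵥ t = _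
      rw [Matrix.sub_mulVec, Matrix.one_mulVec]
      congr 1
      simp [hw0, Matrix.mulVec_mulVec, Matrix.mul_assoc]
    have := e3.symm.trans hHu
    exact (sub_eq_zero.mp this)
  refine ⟨hy, fun i => -(w0 i), fun j => -(v j), fun j => by simpa using hv0 j, ?_, ?_⟩
  · have hA : ∑ i : Fin m, (-(w0 i)) • grad (h i) y = -((matA h y)ᵀ *ᵥ w0) := by
      rw [transpose_mulVec_eq_sum, ← Finset.sum_neg_distrib]
      exact Finset.sum_congr rfl fun i _ => by rw [neg_smul]; rfl
    have hB : ∑ j : Fin k, (-(v j)) • grad (g j) y = -((matB g y)ᵀ *ᵥ v) := by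
      rw [transpose_mulVec_eq_sum, ← Finset.sum_neg_distrib]
      exact Finset.sum_congr rfl fun j _ => by rw [neg_smul]; rfl
    rw [hA, hB]
    have : u + -((matA h y)ᵀ *ᵥ w0) + -((matB g y)ᵀ *ᵥ v) =
        (u - (matB g y)ᵀ *ᵥ v) - (matA h y)ᵀ *ᵥ w0 := by abel
    rw [this, hsub, sub_self]
  · exact Finset.sum_eq_zero fun j _ => by linear_combination -hgv j


section ContAux

variable {X : Type*} [TopologicalSpace X]

lemma contAt_matmul {r s t : ℕ} {A : X → Matrix (Fin r) (Fin s) ℝ}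
    {B : X → Matrix (Fin s) (Fin t) ℝ} {x : X}
    (hA : ContinuousAt A x) (hB : ContinuousAt B x) :
    ContinuousAt (fun z => A z * B z) x := by
  have hc : Continuous fun q : Matrix (Fin r) (Fin s) ℝ × Matrix (Fin s) (Fin t) ℝ =>
      q.1 * q.2 := continuous_fst.matrix_mul continuous_snd
  exact hc.continuousAt.comp (hA.prodMk hB)

lemma contAt_mulVec {r s : ℕ} {A : X → Matrix (Fin r) (Fin s) ℝ}
    {B : X → Fin s → ℝ} {x : X}
    (hA : ContinuousAt A x) (hB : ContinuousAt B x) :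
    ContinuousAt (fun z => A z *ᵥ B z) x := by
  have hc : Continuous fun q : Matrix (Fin r) (Fin s) ℝ × (Fin s → ℝ) =>
      q.1 *ᵥ q.2 := continuous_fst.matrix_mulVec continuous_snd
  exact hc.continuousAt.comp (hA.prodMk hB)

lemma contAt_dot {s : ℕ} {A B : X → Fin s → ℝ} {x : X}
    (hA : ContinuousAt A x) (hB : ContinuousAt B x) :
    ContinuousAt (fun z => A z ⬝ᵥ B z) x := by
  have hc : Continuous fun q : (Fin s → ℝ) × (Fin s → ℝ) =>
      q.1 ⬝ᵥ q.2 := continuous_fst.dotProduct continuous_snd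
  exact hc.continuousAt.comp (hA.prodMk hB)

lemma contAt_transpose {r s : ℕ} {A : X → Matrix (Fin r) (Fin s) ℝ} {x : X}
    (hA : ContinuousAt A x) : ContinuousAt (fun z => (A z)ᵀ) x := by
  have hc : Continuous fun q : Matrix (Fin r) (Fin s) ℝ => qᵀ :=
    continuous_id.matrix_transpose
  exact hc.continuousAt.comp hA

lemma contAt_inv {r : ℕ} {A : X → Matrix (Fin r) (Fin r) ℝ} {x : X}
    (hA : ContinuousAt A x) (hdet : (A x).det ≠ 0) :
    ContinuousAt (fun z => (A z)⁻¹) x := by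
  refine (continuousAt_matrix_inv (A x) ?_).comp hA
  rw [Ring.inverse_eq_inv']
  exact continuousAt_inv₀ hdet

end ContAux

lemma grad_continuous {f : (Fin n → ℝ) → ℝ} (hf : ContDiff ℝ 2 f) :
    Continuous (grad f) := by
  refine continuous_pi fun j => ?_
  have h1 : Continuous fun q : (Fin n → ℝ) × (Fin n → ℝ) => fderiv ℝ f q.1 q.2 :=
    hf.continuous_fderiv_apply (by norm_num)
  exact h1.comp (continuous_id.prodMk continuous_const)

lemma matA_continuous {h : Fin m → (Fin n → ℝ) → ℝ} (hh : ∀ i, ContDiff ℝ 2 (h i)) :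
    Continuous (matA h) :=
  continuous_matrix fun i j => ((continuous_apply j).comp (grad_continuous (hh i)))

lemma matB_continuous {g : Fin k → (Fin n → ℝ) → ℝ} (hg : ∀ j, ContDiff ℝ 2 (g j)) :
    Continuous (matB g) :=
  continuous_matrix fun i j => ((continuous_apply j).comp (grad_continuous (hg i)))

lemma vecF_contAt (θ : (Fin n → ℝ) → ℝ) (h : Fin m → (Fin n → ℝ) → ℝ)
    (g : Fin k → (Fin n → ℝ) → ℝ)
    (hθ : ContDiff ℝ 2 θ) (hhC : ∀ i, ContDiff ℝ 2 (h i)) (hgC : ∀ j, ContDiff ℝ 2 (g j))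
    (R1 : (Fin n → ℝ) → Matrix (Fin n) (Fin n) ℝ)
    (R2 : (Fin n → ℝ) → Matrix (Fin k) (Fin k) ℝ)
    (a b c : Fin k → (Fin n → ℝ) → ℝ) (p : Fin k → ℕ)
    (hR1C : ∀ i j, ContDiff ℝ 1 fun x => R1 x i j)
    (hR2C : ∀ i j, ContDiff ℝ 1 fun x => R2 x i j)
    (haC : ∀ j, ContDiff ℝ 1 (a j)) (hbC : ∀ j, ContDiff ℝ 1 (b j))
    (hcC : ∀ j, ContDiff ℝ 1 (c j))
    (y : Fin n → ℝ) (hy : y ∈ feas h g)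
    (hli : LinearIndependent ℝ
      (Sum.elim (fun i : Fin m => grad (h i) y)
        (fun j : {j : Fin k // g j y = 0} => grad (g (j : Fin k)) y))) :
    ContinuousAt (vecF θ h g R1 R2 a b c p) y ∧
      ContinuousAt (lieG θ h g R1 R2 a b c p) y := by
  have hdA := matAAt_det_isUnit h g y hli
  have hQpd := matQ_posdef h g y hy hli
  have hA : Continuous (matA h) := matA_continuous hhC
  have hB : Continuous (matB g) := matB_continuous hgC
  have hgradθ : Continuous (grad θ) := grad_continuous hθ
  have hAAinv : ContinuousAt (fun z => (matA h z * (matA h z)ᵀ)⁻¹) y :=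
    contAt_inv (contAt_matmul hA.continuousAt (contAt_transpose hA.continuousAt))
      (isUnit_iff_ne_zero.mp hdA)
  have hH : ContinuousAt (matH h) y := by
    have : ContinuousAt (fun z => (1 : Matrix (Fin n) (Fin n) ℝ) -
        (matA h z)ᵀ * (matA h z * (matA h z)ᵀ)⁻¹ * matA h z) y :=
      continuousAt_const.sub
        (contAt_matmul (contAt_matmul (contAt_transpose hA.continuousAt) hAAinv)
          hA.continuousAt)
    exact this
  have hDg : Continuous (fun z => Matrix.diagonal (fun j => g j z)) :=
    (continuous_pi fun j => (hgC j).continuous).matrix_diagonal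
  have hQ : ContinuousAt (matQ h g) y := by
    have : ContinuousAt (fun z => matB g z * matH h z * (matB g z)ᵀ -
        Matrix.diagonal (fun j => g j z)) y :=
      (contAt_matmul (contAt_matmul hB.continuousAt hH) (contAt_transpose hB.continuousAt)).sub
        hDg.continuousAt
    exact this
  have hQinv : ContinuousAt (fun z => (matQ h g z)⁻¹) y :=
    contAt_inv hQ hQpd.det_pos.ne'
  have hP : ContinuousAt (matP h g) y := by
    have : ContinuousAt (fun z => (matQ h g z)⁻¹ * matB g z * matH h z) y :=
      contAt_matmul (contAt_matmul hQinv hB.continuousAt) hH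
    exact this
  have hv : ContinuousAt (vecv θ h g) y := by
    have : ContinuousAt (fun z => matP h g z *ᵥ grad θ z) y :=
      contAt_mulVec hP hgradθ.continuousAt
    exact this
  have hvj : ∀ j, ContinuousAt (fun z => vecv θ h g z j) y := fun j =>
    (continuous_apply j).continuousAt.comp hv
  have hR1 : Continuous R1 := continuous_matrix fun i j => (hR1C i j).continuous
  have hR2 : Continuous R2 := continuous_matrix fun i j => (hR2C i j).continuous
  have hR3 : ContinuousAt (fun z => matR3 b c p z (vecv θ h g z)) y := by
    have hw : ContinuousAt (fun z => fun j =>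
        b j z + c j z * (max 0 (vecv θ h g z j)) ^ (2 * p j)) y := by
      rw [continuousAt_pi]
      intro j
      exact ((hbC j).continuous.continuousAt).add
        (((hcC j).continuous.continuousAt).mul
          ((continuousAt_const.max (hvj j)).pow _))
    have hdc : Continuous (Matrix.diagonal : (Fin k → ℝ) → Matrix (Fin k) (Fin k) ℝ) :=
      continuous_id.matrix_diagonal
    exact hdc.continuousAt.comp hw
  have hpP : ContinuousAt (fun z => pPart (vecv θ h g z)) y := by
    rw [continuousAt_pi]
    intro j
    exact continuousAt_const.max (hvj j)
  have hDa : Continuous (fun z => Matrix.diagonal (fun j => a j z)) :=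
    (continuous_pi fun j => (haC j).continuous).matrix_diagonal
  have hMat : ContinuousAt (fun z =>
      matH h z - (matP h g z)ᵀ * matQ h g z * matP h g z) y :=
    hH.sub (contAt_matmul (contAt_matmul (contAt_transpose hP) hQ) hP)
  have hF : ContinuousAt (vecF θ h g R1 R2 a b c p) y := by
    have : ContinuousAt (fun z =>
        -(((matH h z - (matP h g z)ᵀ * matQ h g z * matP h g z) * R1 z *
            (matH h z - (matP h g z)ᵀ * matQ h g z * matP h g z)) *ᵥ grad θ z)
        - (((matP h g z)ᵀ * Matrix.diagonal (fun j => g j z) *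
            (R2 z * Matrix.diagonal (fun j => g j z) -
              Matrix.diagonal (fun j => a j z))) *ᵥ vecv θ h g z)
        - (((matP h g z)ᵀ * matR3 b c p z (vecv θ h g z)) *ᵥ pPart (vecv θ h g z))) y := by
      refine ContinuousAt.sub (ContinuousAt.sub (ContinuousAt.neg ?_) ?_) ?_
      · exact contAt_mulVec (contAt_matmul (contAt_matmul hMat hR1.continuousAt) hMat)
          hgradθ.continuousAt
      · refine contAt_mulVec (contAt_matmul (contAt_matmul (contAt_transpose hP)
          hDg.continuousAt) ?_) hv
        exact (contAt_matmul hR2.continuousAt hDg.continuousAt).sub hDa.continuousAt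
      · exact contAt_mulVec (contAt_matmul (contAt_transpose hP) hR3) hpP
    exact this
  exact ⟨hF, contAt_dot hgradθ.continuousAt hF⟩

lemma isClosed_feas {h : Fin m → (Fin n → ℝ) → ℝ} {g : Fin k → (Fin n → ℝ) → ℝ}
    (hhC : ∀ i, ContDiff ℝ 2 (h i)) (hgC : ∀ j, ContDiff ℝ 2 (g j)) :
    IsClosed (feas h g) := by
  have : feas h g = (⋂ i, {x | h i x = 0}) ∩ ⋂ j, {x | g j x ≤ 0} := by
    ext x
    simp [feas, Set.mem_iInter, Set.mem_setOf_eq]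
  rw [this]
  exact IsClosed.inter
    (isClosed_iInter fun i => isClosed_eq (hhC i).continuous continuous_const)
    (isClosed_iInter fun j => isClosed_le (hgC j).continuous continuous_const)


lemma clm_apply_eq_dot (L : (Fin n → ℝ) →L[ℝ] ℝ) (u : Fin n → ℝ) :
    L u = (fun j => L (Pi.single j 1)) ⬝ᵥ u := by
  conv_lhs => rw [pi_eq_sum_univ u, map_sum]
  rw [dotProduct]
  refine Finset.sum_congr rfl fun j _ => ?_
  rw [L.map_smul, smul_eq_mul, mul_comm]
  refine congrArg (· * u j) (congrArg L ?_)
  funext j'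
  simp [Pi.single_apply, eq_comm]

end Aux

set_option maxHeartbeats 1000000 in
/-- Trajectory convergence (part of Theorem 2.3): along any solution of `ẋ = F(x)`
staying in `S`, `θ(x(t))` is nonincreasing, the trajectory is bounded, `θ(x(t))`
converges to some `l`, and every accumulation point of `x(t)` as `t → ∞` lies in
`Φ ∩ {x ∈ S : θ(x) = l}`. -/
theorem stmt_18
    {n m k : ℕ} (hmn : m < n)
    (θ : (Fin n → ℝ) → ℝ) (h : Fin m → (Fin n → ℝ) → ℝ) (g : Fin k → (Fin n → ℝ) → ℝ)
    (hθ : ContDiff ℝ 2 θ) (hhC : ∀ i, ContDiff ℝ 2 (h i)) (hgC : ∀ j, ContDiff ℝ 2 (g j))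
    (hH1 : hypH1 θ h g) (hH2 : hypH2 h g)
    (R1 : (Fin n → ℝ) → Matrix (Fin n) (Fin n) ℝ)
    (R2 : (Fin n → ℝ) → Matrix (Fin k) (Fin k) ℝ)
    (a b c : Fin k → (Fin n → ℝ) → ℝ) (p : Fin k → ℕ)
    (hR1C : ∀ i j, ContDiff ℝ 1 fun x => R1 x i j)
    (hR1pd : ∀ x, (R1 x).PosDef)
    (hR2C : ∀ i j, ContDiff ℝ 1 fun x => R2 x i j)
    (hR2psd : ∀ x, (R2 x).PosSemidef)
    (haC : ∀ j, ContDiff ℝ 1 (a j)) (hbC : ∀ j, ContDiff ℝ 1 (b j))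
    (hcC : ∀ j, ContDiff ℝ 1 (c j))
    (ha0 : ∀ j x, 0 ≤ a j x) (hb0 : ∀ j x, 0 ≤ b j x) (hc0 : ∀ j x, 0 ≤ c j x)
    (hbc : ∀ x ∈ feas h g, ∀ j, 0 < b j x + c j x)
    (hpd : ∀ x ∈ feas h g, (R2 x).PosDef ∨ (Matrix.diagonal fun j => a j x).PosDef)
    (hp : ∀ j, 1 ≤ p j)
    (x : ℝ → (Fin n → ℝ))
    (hxC1 : ContDiffOn ℝ 1 x (Set.Ici (0 : ℝ)))
    (hxS : ∀ t : ℝ, 0 ≤ t → x t ∈ feas h g)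
    (hode : ∀ t : ℝ, 0 ≤ t → HasDerivAt x (vecF θ h g R1 R2 a b c p (x t)) t) :
    AntitoneOn (fun t => θ (x t)) (Set.Ici (0 : ℝ)) ∧
    Bornology.IsBounded (x '' Set.Ici (0 : ℝ)) ∧
    ∃ l : ℝ, Filter.Tendsto (fun t => θ (x t)) Filter.atTop (nhds l) ∧
      ∀ y : Fin n → ℝ,
        (∃ t : ℕ → ℝ, Filter.Tendsto t Filter.atTop Filter.atTop ∧
          Filter.Tendsto (fun i => x (t i)) Filter.atTop (nhds y)) →
        y ∈ KKTset θ h g ∧ θ y = l := by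
  classical
  set F := vecF θ h g R1 R2 a b c p with hF
  set G := lieG θ h g R1 R2 a b c p with hG
  set f : ℝ → ℝ := fun t => θ (x t) with hf
  have hθd : Differentiable ℝ θ := hθ.differentiable two_ne_zero
  -- chain rule
  have hfder : ∀ t : ℝ, 0 ≤ t → HasDerivAt f (G (x t)) t := by
    intro t ht
    have h1 := (hθd (x t)).hasFDerivAt.comp_hasDerivAt t (hode t ht)
    have h2 : fderiv ℝ θ (x t) (F (x t)) = G (x t) := by
      rw [hG]
      show fderiv ℝ θ (x t) (F (x t)) = grad θ (x t) ⬝ᵥ F (x t)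
      exact clm_apply_eq_dot _ _
    rw [← h2]
    exact h1
  have hxcont : ContinuousOn x (Set.Ici 0) := hxC1.continuousOn
  have hfc : ContinuousOn f (Set.Ici 0) := hθ.continuous.comp_continuousOn hxcont
  have hGle : ∀ t : ℝ, 0 ≤ t → G (x t) ≤ 0 := fun t ht =>
    lieG_nonpos θ h g R1 R2 a b c p (x t) (hxS t ht) (hR1pd _).posSemidef (hR2psd _)
      (fun j => ha0 j _) (fun j => hb0 j _) (fun j => hc0 j _)
  have hanti : AntitoneOn f (Set.Ici 0) := by
    refine antitoneOn_of_deriv_nonpos (convex_Ici 0) hfc ?_ ?_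
    · intro t ht
      rw [interior_Ici] at ht
      exact (hfder t ht.le).differentiableAt.differentiableWithinAt
    · intro t ht
      rw [interior_Ici] at ht
      rw [(hfder t ht.le).deriv]
      exact hGle t ht.le
  -- boundedness
  have hx0 : x 0 ∈ feas h g := hxS 0 le_rfl
  set K := {z ∈ feas h g | θ z ≤ θ (x 0)} with hK
  have hKcomp : IsCompact K := hH1.2 (x 0) hx0
  have hxK : ∀ t : ℝ, 0 ≤ t → x t ∈ K := fun t ht =>
    ⟨hxS t ht, hanti (Set.self_mem_Ici) ht ht⟩
  have hbound : Bornology.IsBounded (x '' Set.Ici 0) := by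
    refine hKcomp.isBounded.subset ?_
    rintro _ ⟨t, ht, rfl⟩
    exact hxK t ht
  -- existence of the limit
  have hfbd : BddBelow (Set.range fun t : ℝ => f (max t 0)) := by
    obtain ⟨C0, hC0⟩ := (hKcomp.image hθ.continuous).bddBelow
    refine ⟨C0, ?_⟩
    rintro _ ⟨t, rfl⟩
    exact hC0 ⟨x (max t 0), hxK _ (le_max_right _ _), rfl⟩
  have hfanti' : Antitone fun t : ℝ => f (max t 0) := fun s t hst =>
    hanti (le_max_right s 0) (le_max_right t 0) (max_le_max hst le_rfl)
  set l := ⨅ t : ℝ, f (max t 0) with hl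
  have hlt : Tendsto (fun t : ℝ => f (max t 0)) atTop (nhds l) :=
    tendsto_atTop_ciInf hfanti' hfbd
  have hfl : Tendsto f atTop (nhds l) := by
    refine hlt.congr' ?_
    filter_upwards [eventually_ge_atTop (0:ℝ)] with t ht
    rw [max_eq_left ht]
  have hlle : ∀ t : ℝ, 0 ≤ t → l ≤ f t := by
    intro t ht
    have := ciInf_le hfbd t
    rwa [max_eq_left ht] at this
  refine ⟨hanti, hbound, l, hfl, ?_⟩
  rintro y ⟨ts, hts, hconv⟩
  have hyS : y ∈ feas h g := by
    refine (isClosed_feas hhC hgC).mem_of_tendsto hconv ?_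
    filter_upwards [hts.eventually_ge_atTop 0] with i hi using hxS _ hi
  have hliy := hH2 y hyS
  have hθy : Tendsto (fun i => f (ts i)) atTop (nhds l) := hfl.comp hts
  have hθy2 : Tendsto (fun i => f (ts i)) atTop (nhds (θ y)) :=
    (hθ.continuous.tendsto y).comp hconv
  have hyl : θ y = l := tendsto_nhds_unique hθy2 hθy
  -- bound on the vector field over K
  have hFcK : ContinuousOn F K := fun z hz =>
    ((vecF_contAt θ h g hθ hhC hgC R1 R2 a b c p hR1C hR2C haC hbC hcC z hz.1
      (hH2 z hz.1)).1).continuousWithinAt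
  obtain ⟨C, hC⟩ := hKcomp.exists_bound_of_continuousOn hFcK
  have hC0 : 0 ≤ C := le_trans (norm_nonneg _) (hC (x 0) (hxK 0 le_rfl))
  have hlip : ∀ t₁ t₂ : ℝ, 0 ≤ t₁ → t₁ ≤ t₂ → ‖x t₂ - x t₁‖ ≤ C * (t₂ - t₁) := by
    intro t₁ t₂ h1 h12
    have := norm_image_sub_le_of_norm_deriv_le_segment'
      (f := x) (f' := fun s => F (x s)) (a := t₁) (b := t₂)
      (fun s hs => (hode s (le_trans h1 hs.1)).hasDerivWithinAt)
      (fun s hs => hC (x s) (hxK s (le_trans h1 hs.1))) t₂ (Set.right_mem_Icc.mpr h12)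
    exact this
  -- the Lie derivative vanishes at y
  have hGc : ContinuousAt G y :=
    (vecF_contAt θ h g hθ hhC hgC R1 R2 a b c p hR1C hR2C haC hbC hcC y hyS hliy).2
  have hGy_le : G y ≤ 0 :=
    lieG_nonpos θ h g R1 R2 a b c p y hyS (hR1pd _).posSemidef (hR2psd _)
      (fun j => ha0 j _) (fun j => hb0 j _) (fun j => hc0 j _)
  have hGy : G y = 0 := by
    by_contra hne
    have hGylt : G y < 0 := lt_of_le_of_ne hGy_le hne
    set δ := -(G y) with hδ
    have hδpos : 0 < δ := by simp [hδ]; linarith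
    have hmem : {z | G z < -(δ/2)} ∈ nhds y := by
      have : Set.Iio (-(δ/2)) ∈ nhds (G y) := Iio_mem_nhds (by simp [hδ]; linarith)
      exact hGc this
    obtain ⟨η, hηpos, hball⟩ := Metric.mem_nhds_iff.mp hmem
    set ε := min (η / (2 * (C + 1))) 1 with hε
    have hεpos : 0 < ε := lt_min (by positivity) one_pos
    have hεle : C * ε ≤ η / 2 := by
      have h1 : ε ≤ η / (2 * (C + 1)) := min_le_left _ _
      have h2 : C * ε ≤ C * (η / (2 * (C + 1))) := by
        apply mul_le_mul_of_nonneg_left h1 hC0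
      have h3 : C * (η / (2 * (C + 1))) ≤ η / 2 := by
        rw [mul_div_assoc', div_le_div_iff₀ (by positivity) (by norm_num : (0:ℝ) < 2)]
        nlinarith [hηpos.le, hC0]
      linarith
    have hev1 : ∀ᶠ i in atTop, (0:ℝ) ≤ ts i := hts.eventually_ge_atTop 0
    have hev2 : ∀ᶠ i in atTop, dist (x (ts i)) y < η / 2 := by
      have := hconv (Metric.ball_mem_nhds y (half_pos hηpos))
      filter_upwards [this] with i hi using hi
    have hev3 : ∀ᶠ i in atTop, f (ts i) < l + δ * ε / 4 := by
      have : Set.Iio (l + δ * ε / 4) ∈ nhds l := Iio_mem_nhds (by nlinarith)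
      filter_upwards [hθy this] with i hi using hi
    obtain ⟨i, hi1, hi2, hi3⟩ := (hev1.and (hev2.and hev3)).exists
    -- on [ts i, ts i + ε] the trajectory stays in the ball
    have hGxs : ∀ s ∈ Set.Icc (ts i) (ts i + ε), G (x s) < -(δ/2) := by
      intro s hs
      have hs0 : (0:ℝ) ≤ s := le_trans hi1 hs.1
      apply hball
      rw [Metric.mem_ball]
      have h1 : dist (x s) (x (ts i)) ≤ C * ε := by
        rw [dist_eq_norm]
        have h1' : ‖x s - x (ts i)‖ ≤ C * (s - ts i) := hlip (ts i) s hi1 hs.1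
        have h2' : C * (s - ts i) ≤ C * ε := by
          apply mul_le_mul_of_nonneg_left _ hC0
          linarith [hs.2]
        linarith
      have h3 := dist_triangle (x s) (x (ts i)) y
      linarith [hi2, hεle]
    have hd : ∀ s ∈ Set.Ioo (ts i) (ts i + ε),
        HasDerivAt (fun s => f s + (δ/2) * s) (G (x s) + δ/2) s := by
      intro s hs
      have h1 := hfder s (le_trans hi1 hs.1.le)
      have h2 : HasDerivAt (fun s : ℝ => (δ/2) * s) (δ/2) s := by
        simpa using (hasDerivAt_id s).const_mul (δ/2)
      exact h1.add h2
    have hanti2 : AntitoneOn (fun s => f s + (δ/2) * s) (Set.Icc (ts i) (ts i + ε)) := by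
      refine antitoneOn_of_deriv_nonpos (convex_Icc _ _) ?_ ?_ ?_
      · refine ContinuousOn.add (hfc.mono ?_) ((continuous_const.mul continuous_id).continuousOn)
        intro s hs
        exact le_trans hi1 hs.1
      · intro s hs
        rw [interior_Icc] at hs
        exact (hd s hs).differentiableAt.differentiableWithinAt
      · intro s hs
        rw [interior_Icc] at hs
        rw [(hd s hs).deriv]
        have := hGxs s (Set.mem_Icc.mpr ⟨hs.1.le, hs.2.le⟩)
        linarith
    have hstep := hanti2 (Set.left_mem_Icc.mpr (by linarith))
      (Set.right_mem_Icc.mpr (by linarith)) (by linarith)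
    have hl1 := hlle (ts i + ε) (by linarith)
    have hstep' : f (ts i + ε) + δ/2 * (ts i + ε) ≤ f (ts i) + δ/2 * (ts i) := hstep
    nlinarith [mul_pos hδpos hεpos]
  have hkkt := lieG_zero_kkt θ h g R1 R2 a b c p y hyS hliy (hR1pd y) (hR2psd y)
    (fun j => ha0 j y) (fun j => hb0 j y) (fun j => hc0 j y) (fun j => hbc y hyS j)
    (hpd y hyS) hGy
  exact ⟨hkkt, hyl⟩


end
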